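/- If A ⊆ 2^ω is non scattered (contains a subset order isomorphic to ℚ under ≤_lex), then T = {s ∈ 2^{<ω} : W_s ∩ A is non scattered} is a perfect subtree of 2^{<ω}. -/

import Mathlib

noncomputable section
open Classical

/-- Lexicographic strict order on `ℕ → Fin b`. -/
def lexLT (b : ℕ) (x y : ℕ → Fin b) : Prop :=
  ∃ n, (∀ m, m < n → x m = y m) ∧ x n < y n

/-- Lexicographic order `≤_lex` on `ℕ → Fin b`. -/
def lexLE (b : ℕ) (x y : ℕ → Fin b) : Prop := x = y ∨ lexLT b x y

def IsGreatestLex (b : ℕ) (S : Set (ℕ → Fin b)) (x : ℕ → Fin b) : Prop :=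
  x ∈ S ∧ ∀ y ∈ S, lexLE b y x

def IsLeastLex (b : ℕ) (S : Set (ℕ → Fin b)) (x : ℕ → Fin b) : Prop :=
  x ∈ S ∧ ∀ y ∈ S, lexLE b x y

/-- `S` is an interval for the lexicographic order. -/
def LexInterval (b : ℕ) (S : Set (ℕ → Fin b)) : Prop :=
  ∀ x ∈ S, ∀ y ∈ S, ∀ z, lexLE b x z → lexLE b z y → z ∈ S

/-- The basic clopen set of sequences extending the finite sequence `s`. -/
def W (b : ℕ) (s : List (Fin b)) : Set (ℕ → Fin b) :=
  {x | ∀ i, (hi : i < s.length) → x i = s.get ⟨i, hi⟩}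

/-- Continuous nondecreasing surjections of `b^ω`, i.e. members of `C↑_sur(b^ω)`. -/
def CSur (b : ℕ) (f : (ℕ → Fin b) → (ℕ → Fin b)) : Prop :=
  Continuous f ∧ Function.Surjective f ∧ ∀ x y, lexLE b x y → lexLE b (f x) (f y)

/-- A filtering on `b^ω`. -/
def Filtering (b : ℕ) (U : List (Fin b) → Set (ℕ → Fin b)) : Prop :=
  (∀ s, (U s).Nonempty ∧ IsClopen (U s) ∧ LexInterval b (U s)) ∧
  U [] = Set.univ ∧
  (∀ s, U s = ⋃ i : Fin b, U (s ++ [i])) ∧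
  (∀ s, ∀ i j : Fin b, i ≠ j → Disjoint (U (s ++ [i])) (U (s ++ [j]))) ∧
  (∀ s, ∀ i j : Fin b, i < j → ∀ x y,
    IsGreatestLex b (U (s ++ [i])) x → IsGreatestLex b (U (s ++ [j])) y → lexLT b x y)

/-- `A_b`: sequences eventually equal to `b-1` (the top of `Fin b`), except the constant
top sequence (the lexicographic maximum of `b^ω`). -/
def AbSet (b : ℕ) : Set (ℕ → Fin b) :=
  {x | (∃ N, ∀ n, N ≤ n → ∀ j : Fin b, j ≤ x n) ∧ ¬ ∀ n, ∀ j : Fin b, j ≤ x n}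

/-- `Y` is order isomorphic to `ℚ` with respect to the lexicographic order. -/
def OrderIsoQ (b : ℕ) (Y : Set (ℕ → Fin b)) : Prop :=
  ∃ e : ℚ ≃ Y, ∀ p q : ℚ, p ≤ q ↔ lexLE b (e p).1 (e q).1

/-- `Y_f = {max f⁻¹(W_s) : s ∈ b^{<ω}} \ {max b^ω}`. -/
def Yset (b : ℕ) (f : (ℕ → Fin b) → (ℕ → Fin b)) : Set (ℕ → Fin b) :=
  {x | (∃ s : List (Fin b), IsGreatestLex b (f ⁻¹' W b s) x) ∧ ¬ ∀ n, ∀ j : Fin b, j ≤ x n}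

/-- The metric `ρ_b` on `b^ω`. -/
def rhoB (b : ℕ) (x y : ℕ → Fin b) : ℝ :=
  if h : x = y then 0 else (2 : ℝ) ^ (-(Nat.find (Function.ne_iff.mp h) : ℤ))

/-- The sup-metric `ρ_∞` on `C↑_sur(b^ω)`. -/
def rhoInf (b : ℕ) (f g : (ℕ → Fin b) → (ℕ → Fin b)) : ℝ :=
  ⨆ x, rhoB b (f x) (g x)

/-- `⌊log₂(1/ε)⌋ + 1`. -/
def kOf (ε : ℝ) : ℕ := ⌊Real.logb 2 (1 / ε)⌋₊ + 1

/-- The `l`-th odd tangent number `t_l = tan^{(2l-1)}(0)`. -/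
def oddTangent (l : ℕ) : ℝ := iteratedDeriv (2 * l - 1) Real.tan 0

/-- The lexicographically increasing enumeration of `b^k`: `sEnum b k hb i` is the
`i`-th element of `b^k` in lexicographic order (base-`b` digits, most significant first). -/
def sEnum (b k : ℕ) (hb : 0 < b) (i : ℕ) : List (Fin b) :=
  List.ofFn fun j : Fin k => (⟨i / b ^ (k - 1 - (j : ℕ)) % b, Nat.mod_lt _ hb⟩ : Fin b)

end

/-- `A ⊆ 2^ω` is non scattered if it contains a subset order isomorphic to `ℚ`. -/
def NonScattered (A : Set (ℕ → Fin 2)) : Prop :=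
  ∃ Y ⊆ A, OrderIsoQ 2 Y

/-- `T` is a subtree of `2^{<ω}`: closed under initial segments. -/
def IsSubtree (T : Set (List (Fin 2))) : Prop :=
  ∀ s t : List (Fin 2), t ∈ T → s <+: t → s ∈ T

/-- `s` is a splitting node of `T`. -/
def IsSplitNode (T : Set (List (Fin 2))) (s : List (Fin 2)) : Prop :=
  (∃ t ∈ T, s ++ [0] <+: t) ∧ (∃ t ∈ T, s ++ [1] <+: t)

/-- `T` is a perfect subtree. -/
def IsPerfectSubtree (T : Set (List (Fin 2))) : Prop :=
  IsSubtree T ∧ ∀ s ∈ T, ∃ t, IsSplitNode T t ∧ s <+: t ∧ s ≠ t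

namespace NSAux

lemma fin2cases (c : Fin 2) : c = 0 ∨ c = 1 := by revert c; decide

lemma lexLT_irrefl {b : ℕ} (x : ℕ → Fin b) : ¬ lexLT b x x := by
  rintro ⟨n, -, h⟩; exact lt_irrefl _ h

lemma lexLT_ne {b : ℕ} {x y : ℕ → Fin b} (h : lexLT b x y) : x ≠ y := by
  rintro rfl; exact lexLT_irrefl x h

lemma lexLT_asymm {b : ℕ} {x y : ℕ → Fin b} (h : lexLT b x y) (h' : lexLT b y x) : False := by
  obtain ⟨n, h1, h2⟩ := h
  obtain ⟨n', h1', h2'⟩ := h'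
  rcases lt_trichotomy n n' with hl | rfl | hl
  · rw [h1' n hl] at h2; exact lt_irrefl _ h2
  · exact lt_irrefl _ (h2.trans h2')
  · rw [h1 n' hl] at h2'; exact lt_irrefl _ h2'

lemma lexLT_trans {b : ℕ} {x y z : ℕ → Fin b} (h : lexLT b x y) (h' : lexLT b y z) :
    lexLT b x z := by
  obtain ⟨n, h1, h2⟩ := h
  obtain ⟨n', h1', h2'⟩ := h'
  rcases lt_trichotomy n n' with hl | rfl | hl
  · exact ⟨n, fun m hm => (h1 m hm).trans (h1' m (hm.trans hl)),
      by rw [← h1' n hl]; exact h2⟩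
  · exact ⟨n, fun m hm => (h1 m hm).trans (h1' m hm), h2.trans h2'⟩
  · exact ⟨n', fun m hm => (h1 m (hm.trans hl)).trans (h1' m hm),
      by rw [h1 n' hl]; exact h2'⟩

lemma lexLT_total {b : ℕ} {x y : ℕ → Fin b} (h : x ≠ y) : lexLT b x y ∨ lexLT b y x := by
  have hne : ∃ n, x n ≠ y n := Function.ne_iff.mp h
  have hagree : ∀ m, m < Nat.find hne → x m = y m :=
    fun m hm => not_not.1 (Nat.find_min hne hm)
  rcases lt_or_gt_of_ne (Nat.find_spec hne) with h' | h'
  · exact Or.inl ⟨Nat.find hne, hagree, h'⟩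
  · exact Or.inr ⟨Nat.find hne, fun m hm => (hagree m hm).symm, h'⟩

lemma mem_W {b : ℕ} {s : List (Fin b)} {x : ℕ → Fin b} (hx : x ∈ W b s) (i : ℕ)
    (hi : i < s.length) : x i = s[i] := by
  have := hx i hi; simpa [List.get_eq_getElem] using this

lemma mem_W_of {b : ℕ} {s : List (Fin b)} {x : ℕ → Fin b}
    (h : ∀ i (hi : i < s.length), x i = s[i]) : x ∈ W b s := by
  intro i hi; simpa [List.get_eq_getElem] using h i hi

lemma W_mono {b : ℕ} {s t : List (Fin b)} (h : s <+: t) : W b t ⊆ W b s := by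
  intro x hx
  refine mem_W_of fun i hi => ?_
  rw [mem_W hx i (lt_of_lt_of_le hi h.length_le)]
  exact (h.getElem hi).symm

lemma mem_W_append {b : ℕ} {s : List (Fin b)} {x : ℕ → Fin b} (hx : x ∈ W b s) {c : Fin b}
    (hc : x s.length = c) : x ∈ W b (s ++ [c]) := by
  refine mem_W_of fun i hi => ?_
  rcases lt_or_eq_of_le (Nat.lt_succ_iff.mp (by simpa using hi)) with h' | h'
  · rw [List.getElem_append_left h']; exact mem_W hx i h'
  · subst h'; rw [List.getElem_concat_length (l := s) (a := c) rfl]; exact hc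

lemma mem_W_child {s : List (Fin 2)} {x : ℕ → Fin 2} (hx : x ∈ W 2 s) :
    x ∈ W 2 (s ++ [0]) ∨ x ∈ W 2 (s ++ [1]) := by
  rcases fin2cases (x s.length) with h | h
  · exact Or.inl (mem_W_append hx h)
  · exact Or.inr (mem_W_append hx h)

lemma lexLT_children {s : List (Fin 2)} {x y : ℕ → Fin 2}
    (hx : x ∈ W 2 (s ++ [0])) (hy : y ∈ W 2 (s ++ [1])) : lexLT 2 x y := by
  have hlen : s.length < (s ++ [0]).length := by simp
  have hlen' : s.length < (s ++ [1]).length := by simp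
  refine ⟨s.length, fun m hm => ?_, ?_⟩
  · rw [mem_W hx m (hm.trans hlen), mem_W hy m (hm.trans hlen'),
      List.getElem_append_left hm, List.getElem_append_left hm]
  · rw [mem_W hx s.length hlen, mem_W hy s.length hlen',
      List.getElem_concat_length (l := s) rfl, List.getElem_concat_length (l := s) rfl]
    decide

lemma W_interval {b : ℕ} {s : List (Fin b)} {x y z : ℕ → Fin b} (hx : x ∈ W b s)
    (hy : y ∈ W b s) (h1 : lexLE b x z) (h2 : lexLE b z y) : z ∈ W b s := by
  rcases h1 with rfl | ⟨n, ha, hlt⟩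
  · exact hx
  rcases h2 with rfl | h2'
  · exact hy
  by_cases hn : s.length ≤ n
  · refine mem_W_of fun i hi => ?_
    rw [← ha i (lt_of_lt_of_le hi hn)]; exact mem_W hx i hi
  · exfalso
    push_neg at hn
    have hyz : lexLT b y z := by
      refine ⟨n, fun m hm => ?_, ?_⟩
      · rw [mem_W hy m (hm.trans hn), ← mem_W hx m (hm.trans hn)]; exact ha m hm
      · rw [mem_W hy n hn, ← mem_W hx n hn]; exact hlt
    exact lexLT_asymm h2' hyz

end NSAux
namespace NSAux

def TwoPts (S : Set (ℕ → Fin 2)) : Prop := ∃ u ∈ S, ∃ v ∈ S, u ≠ v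

lemma eLT {Y : Set (ℕ → Fin 2)} (e : ℚ ≃ Y)
    (he : ∀ p q : ℚ, p ≤ q ↔ lexLE 2 (e p).1 (e q).1) {p q : ℚ} :
    p < q ↔ lexLT 2 (e p).1 (e q).1 := by
  constructor
  · intro h
    rcases (he p q).1 h.le with heq | hlt
    · exact absurd (e.injective (Subtype.ext heq)) h.ne
    · exact hlt
  · intro h
    by_contra hle
    push_neg at hle
    rcases (he q p).1 hle with heq | hlt
    · exact lexLT_ne h heq.symm
    · exact lexLT_asymm h hlt

lemma shrink {Y : Set (ℕ → Fin 2)} (hY : OrderIsoQ 2 Y) {s : List (Fin 2)} {u v : ℕ → Fin 2}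
    (hu : u ∈ Y) (hus : u ∈ W 2 s) (hv : v ∈ Y) (hvs : v ∈ W 2 s) (huv : lexLT 2 u v) :
    ∃ Z, Z ⊆ Y ∧ Z ⊆ W 2 s ∧ OrderIsoQ 2 Z := by
  obtain ⟨e, he⟩ := hY
  set p := e.symm ⟨u, hu⟩ with hp
  set q := e.symm ⟨v, hv⟩ with hq
  have hep : (e p).1 = u := by rw [hp, e.apply_symm_apply]
  have heq : (e q).1 = v := by rw [hq, e.apply_symm_apply]
  have hpq : p < q := (eLT e he).2 (by rw [hep, heq]; exact huv)
  have hne : Nonempty (Set.Ioo p q) := (Set.nonempty_Ioo.2 hpq).to_subtype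
  obtain ⟨g⟩ := Order.iso_of_countable_dense ℚ (Set.Ioo p q)
  refine ⟨(fun r => (e r).1) '' (Set.Ioo p q), ?_, ?_, ?_⟩
  · rintro _ ⟨r, -, rfl⟩; exact (e r).2
  · rintro _ ⟨r, hr, rfl⟩
    have h1 : lexLT 2 u (e r).1 := by rw [← hep]; exact (eLT e he).1 hr.1
    have h2 : lexLT 2 (e r).1 v := by rw [← heq]; exact (eLT e he).1 hr.2
    exact W_interval hus hvs (Or.inr h1) (Or.inr h2)
  · have hmem : ∀ r : ℚ, (e ((g r : Set.Ioo p q) : ℚ)).1 ∈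
        (fun r => (e r).1) '' (Set.Ioo p q) := fun r => ⟨(g r : Set.Ioo p q), (g r).2, rfl⟩
    have hbij : Function.Bijective
        (fun r : ℚ => (⟨(e ((g r : Set.Ioo p q) : ℚ)).1, hmem r⟩ :
          (fun r => (e r).1) '' (Set.Ioo p q))) := by
      constructor
      · intro a b hab
        have h1 : (e ((g a : Set.Ioo p q) : ℚ)).1 = (e ((g b : Set.Ioo p q) : ℚ)).1 :=
by
          simpa using congrArg Subtype.val hab
        have h2 := e.injective (Subtype.ext h1)
        have h3 : (g a : Set.Ioo p q) = g b := Subtype.ext h2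
        exact g.injective h3
      · rintro ⟨_, r, hr, rfl⟩
        refine ⟨g.symm ⟨r, hr⟩, ?_⟩
        apply Subtype.ext
        simp
    refine ⟨Equiv.ofBijective _ hbij, fun a b => ?_⟩
    simp only [Equiv.ofBijective_apply]
    rw [← he]
    constructor
    · intro h
      exact Subtype.coe_le_coe.2 (g.le_iff_le.2 h)
    · intro h
      exact g.le_iff_le.1 (Subtype.coe_le_coe.1 h)

lemma threePts {Y : Set (ℕ → Fin 2)} (hY : OrderIsoQ 2 Y) :
    ∃ u v w, u ∈ Y ∧ v ∈ Y ∧ w ∈ Y ∧ lexLT 2 u v ∧ lexLT 2 v w := by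
  obtain ⟨e, he⟩ := hY
  exact ⟨(e 0).1, (e 1).1, (e 2).1, (e 0).2, (e 1).2, (e 2).2,
    (eLT e he).1 (by norm_num), (eLT e he).1 (by norm_num)⟩

lemma ns_of_two {Z : Set (ℕ → Fin 2)} (hZ : OrderIsoQ 2 Z) {s : List (Fin 2)}
    (h : TwoPts (Z ∩ W 2 s)) :
    ∃ Z', Z' ⊆ Z ∧ Z' ⊆ W 2 s ∧ OrderIsoQ 2 Z' := by
  obtain ⟨u, ⟨huZ, huW⟩, v, ⟨hvZ, hvW⟩, huv⟩ := h
  rcases lexLT_total huv with hlt | hlt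
  · exact shrink hZ huZ huW hvZ hvW hlt
  · exact shrink hZ hvZ hvW huZ huW hlt

lemma step_lemma {Z : Set (ℕ → Fin 2)} (hZ : OrderIsoQ 2 Z) {s : List (Fin 2)}
    (h : TwoPts (Z ∩ W 2 s)) : ∃ i : Fin 2, TwoPts (Z ∩ W 2 (s ++ [i])) := by
  obtain ⟨Z', hZ'Z, hZ'W, hZ'iso⟩ := ns_of_two hZ h
  obtain ⟨u, v, w, hu, hv, hw, huv, hvw⟩ := threePts hZ'iso
  have huZ : u ∈ Z := hZ'Z hu
  have hvZ : v ∈ Z := hZ'Z hv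
  have hwZ : w ∈ Z := hZ'Z hw
  have huvne := lexLT_ne huv
  have hvwne := lexLT_ne hvw
  have huwne := lexLT_ne (lexLT_trans huv hvw)
  rcases mem_W_child (hZ'W hu) with h0 | h0 <;>
    rcases mem_W_child (hZ'W hv) with h1 | h1 <;>
      rcases mem_W_child (hZ'W hw) with h2 | h2
  · exact ⟨0, u, ⟨huZ, h0⟩, v, ⟨hvZ, h1⟩, huvne⟩
  · exact ⟨0, u, ⟨huZ, h0⟩, v, ⟨hvZ, h1⟩, huvne⟩
  · exact ⟨0, u, ⟨huZ, h0⟩, w, ⟨hwZ, h2⟩, huwne⟩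
  · exact ⟨1, v, ⟨hvZ, h1⟩, w, ⟨hwZ, h2⟩, hvwne⟩
  · exact ⟨0, v, ⟨hvZ, h1⟩, w, ⟨hwZ, h2⟩, hvwne⟩
  · exact ⟨1, u, ⟨huZ, h0⟩, w, ⟨hwZ, h2⟩, huwne⟩
  · exact ⟨1, u, ⟨huZ, h0⟩, v, ⟨hvZ, h1⟩, huvne⟩
  · exact ⟨1, u, ⟨huZ, h0⟩, v, ⟨hvZ, h1⟩, huvne⟩

end NSAux
namespace NSAux

lemma keyD {Z : Set (ℕ → Fin 2)} (hZ : OrderIsoQ 2 Z) {r : List (Fin 2)} (hZr : Z ⊆ W 2 r) :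
    ∃ t, r <+: t ∧ TwoPts (Z ∩ W 2 (t ++ [0])) ∧ TwoPts (Z ∩ W 2 (t ++ [1])) := by
  classical
  by_contra hcon
  push_neg at hcon
  obtain ⟨e, he⟩ := hZ
  have hZiso : OrderIsoQ 2 Z := ⟨e, he⟩
  have h10 : (1 : Fin 2) - 0 = 1 := by decide
  have h11 : (1 : Fin 2) - 1 = 0 := by decide
  have hTwo0 : TwoPts (Z ∩ W 2 r) := by
    obtain ⟨u, v, w, hu, hv, hw, huv, hvw⟩ := threePts hZiso
    exact ⟨u, ⟨hu, hZr hu⟩, v, ⟨hv, hZr hv⟩, lexLT_ne huv⟩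
  have hstep := fun (p : {t : List (Fin 2) // r <+: t ∧ TwoPts (Z ∩ W 2 t)}) =>
    step_lemma hZiso p.2.2
  choose F hF using hstep
  obtain ⟨seq, hseq0, hseqS⟩ :
      ∃ seq : ℕ → {t : List (Fin 2) // r <+: t ∧ TwoPts (Z ∩ W 2 t)},
        (seq 0).1 = r ∧ ∀ n, (seq (n+1)).1 = (seq n).1 ++ [F (seq n)] :=
    ⟨fun n => Nat.rec ⟨r, List.prefix_refl r, hTwo0⟩
        (fun _ p => ⟨p.1 ++ [F p], p.2.1.trans (List.prefix_append _ _), hF p⟩) n,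
      rfl, fun n => rfl⟩
  set t : ℕ → List (Fin 2) := fun n => (seq n).1 with ht
  set i : ℕ → Fin 2 := fun n => F (seq n) with hi
  have hpre : ∀ n, r <+: t n := fun n => (seq n).2.1
  have hTwo : ∀ n, TwoPts (Z ∩ W 2 (t n)) := fun n => (seq n).2.2
  have hsucc : ∀ n, t (n+1) = t n ++ [i n] := hseqS
  have hchosen : ∀ n, TwoPts (Z ∩ W 2 (t n ++ [i n])) := fun n => hF (seq n)
  have hlen : ∀ n, (t n).length = r.length + n := by
    intro n
    induction n with
    | zero =>
      have h0 : t 0 = r := hseq0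
      rw [h0]; omega
    | succ k ih =>
      rw [hsucc k]
      simp only [List.length_append, List.length_cons, List.length_nil, ih]
      omega
  have hmonoAux : ∀ n m, m ≤ n → t m <+: t n := by
    intro n
    induction n with
    | zero =>
      intro m hm
      have : m = 0 := Nat.le_zero.mp hm
      subst this; exact List.prefix_refl _
    | succ k ih =>
      intro m hm
      by_cases h : m = k + 1
      · subst h; exact List.prefix_refl _
      · refine (ih m (by omega)).trans ?_
        rw [hsucc k]; exact List.prefix_append _ _
  have hmono : ∀ m n, m ≤ n → t m <+: t n := fun m n h => hmonoAux n m h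
  -- the off-child is a subsingleton
  have hnotoff : ∀ n, ¬ TwoPts (Z ∩ W 2 (t n ++ [1 - i n])) := by
    intro n hbad
    rcases fin2cases (i n) with h | h
    · rw [h, h10] at hbad
      have hch := hchosen n; rw [h] at hch
      exact hcon (t n) (hpre n) hch hbad
    · rw [h, h11] at hbad
      have hch := hchosen n; rw [h] at hch
      exact hcon (t n) (hpre n) hbad hch
  have hoff : ∀ n x y, x ∈ Z ∩ W 2 (t n ++ [1 - i n]) → y ∈ Z ∩ W 2 (t n ++ [1 - i n]) →
      x = y := by
    intro n x y hx hy
    by_contra hne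
    exact hnotoff n ⟨x, hx, y, hy, hne⟩
  have hcore : ∀ x y : ℕ → Fin 2, (∀ n, x ∈ W 2 (t n)) → (∀ n, y ∈ W 2 (t n)) → x = y := by
    intro x y hx hy
    funext k
    have hk : k < (t (k+1)).length := by rw [hlen]; omega
    rw [mem_W (hx (k+1)) k hk]
    exact (mem_W (hy (k+1)) k hk).symm
  have hdecomp : ∀ z, z ∈ Z → (∀ n, z ∈ W 2 (t n)) ∨ ∃ n, z ∈ W 2 (t n ++ [1 - i n]) := by
    intro z hz
    by_cases hall : ∀ n, z ∈ W 2 (t n)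
    · exact Or.inl hall
    · right
      push_neg at hall
      have hex : ∃ n, z ∉ W 2 (t n) := hall
      have hspec : z ∉ W 2 (t (Nat.find hex)) := Nat.find_spec hex
      have hzr : z ∈ W 2 (t 0) := by
        have : (t 0) = r := hseq0
        rw [this]; exact hZr hz
      have hpos : Nat.find hex ≠ 0 := by
        intro h; rw [h] at hspec; exact hspec hzr
      obtain ⟨k, hk⟩ := Nat.exists_eq_succ_of_ne_zero hpos
      have hzk : z ∈ W 2 (t k) := not_not.1 (Nat.find_min hex (by omega))
      have hnot : z ∉ W 2 (t (k+1)) := by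
        rw [← Nat.succ_eq_add_one, ← hk]; exact hspec
      refine ⟨k, ?_⟩
      rcases mem_W_child hzk with h | h <;> rcases fin2cases (i k) with hik | hik
      · exact absurd (by rw [hsucc k, hik]; exact h) hnot
      · rw [hik, h11]; exact h
      · rw [hik, h10]; exact h
      · exact absurd (by rw [hsucc k, hik]; exact h) hnot
  have hinf : ∀ N, ∃ n, N ≤ n ∧ (Z ∩ W 2 (t n ++ [1 - i n])).Nonempty := by
    intro N
    by_contra hno
    push_neg at hno
    obtain ⟨u, ⟨huZ, huW⟩, v, ⟨hvZ, hvW⟩, huv⟩ := hTwo N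
    have hfwd : ∀ w, w ∈ Z → w ∈ W 2 (t N) → ∀ k, w ∈ W 2 (t (N + k)) := by
      intro w hwZ hwW k
      induction k with
      | zero => exact hwW
      | succ j ih =>
        have hNj : N + (j+1) = (N+j) + 1 := rfl
        rw [hNj, hsucc (N+j)]
        rcases mem_W_child ih with h | h <;> rcases fin2cases (i (N+j)) with hij | hij
        · rw [hij]; exact h
        · exfalso
          have hmem : w ∈ Z ∩ W 2 (t (N+j) ++ [1 - i (N+j)]) :=
            ⟨hwZ, by rw [hij, h11]; exact h⟩
          rw [hno (N+j) (by omega)] at hmem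
          exact hmem
        · exfalso
          have hmem : w ∈ Z ∩ W 2 (t (N+j) ++ [1 - i (N+j)]) :=
            ⟨hwZ, by rw [hij, h10]; exact h⟩
          rw [hno (N+j) (by omega)] at hmem
          exact hmem
        · rw [hij]; exact h
    have hall : ∀ w, w ∈ Z → w ∈ W 2 (t N) → ∀ n, w ∈ W 2 (t n) := by
      intro w hwZ hwW n
      rcases le_total n N with h | h
      · exact W_mono (hmono n N h) hwW
      · have := hfwd w hwZ hwW (n - N)
        rwa [Nat.add_sub_cancel' h] at this
    exact huv (hcore u v (hall u huZ huW) (hall v hvZ hvW))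
  -- the final contradiction from two same-direction off-levels
  have hfinal : ∀ n m, n < m → i n = i m → (Z ∩ W 2 (t n ++ [1 - i n])).Nonempty →
      (Z ∩ W 2 (t m ++ [1 - i m])).Nonempty → False := by
    rintro n m hnm hieq ⟨a, haZ, haW⟩ ⟨b, hbZ, hbW⟩
    have hWm : W 2 (t m) ⊆ W 2 (t (n+1)) := W_mono (hmono (n+1) m hnm)
    have hfinIoo : Finite (Set.Ioo n m : Set ℕ) := (Set.finite_Ioo n m).to_subtype
    rcases fin2cases (i n) with hin | hin
    · -- i n = i m = 0 : off-children are the right children, b < a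
      have him : i m = 0 := by rw [← hieq]; exact hin
      have haW' : a ∈ W 2 (t n ++ [1]) := by rw [hin, h10] at haW; exact haW
      have hbW' : b ∈ W 2 (t m ++ [1]) := by rw [him, h10] at hbW; exact hbW
      have hbW0 : b ∈ W 2 (t n ++ [0]) := by
        have := hWm (W_mono (List.prefix_append _ _) hbW')
        rwa [hsucc n, hin] at this
      have hba : lexLT 2 b a := lexLT_children hbW0 haW'
      set p := e.symm ⟨b, hbZ⟩ with hp
      set q := e.symm ⟨a, haZ⟩ with hq
      have hep : (e p).1 = b := by rw [hp, e.apply_symm_apply]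
      have heq : (e q).1 = a := by rw [hq, e.apply_symm_apply]
      have hpq : p < q := (eLT e he).2 (by rw [hep, heq]; exact hba)
      have key : ∀ rr : ℚ, rr ∈ Set.Ioo p q →
          ∃ k, n < k ∧ k < m ∧ (e rr).1 ∈ Z ∩ W 2 (t k ++ [1 - i k]) := by
        intro rr hrr
        have hzZ : (e rr).1 ∈ Z := (e rr).2
        have hbz : lexLT 2 b (e rr).1 := by rw [← hep]; exact (eLT e he).1 hrr.1
        have hza : lexLT 2 (e rr).1 a := by rw [← heq]; exact (eLT e he).1 hrr.2
        rcases hdecomp _ hzZ with hall | ⟨k, hk⟩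
        · exfalso
          have h1 : (e rr).1 ∈ W 2 (t m ++ [0]) := by
            have := hall (m+1); rwa [hsucc m, him] at this
          exact lexLT_asymm hbz (lexLT_children h1 hbW')
        · have hkn : ¬ k < n := by
            intro hlt2
            rcases fin2cases (i k) with hik | hik
            · have h1 : a ∈ W 2 (t (k+1)) :=
                W_mono (hmono (k+1) n hlt2) (W_mono (List.prefix_append _ _) haW')
              rw [hsucc k, hik] at h1
              have h2 : (e rr).1 ∈ W 2 (t k ++ [1]) := by rw [hik, h10] at hk; exact hk
              exact lexLT_asymm hza (lexLT_children h1 h2)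
            · have h1 : b ∈ W 2 (t (k+1)) :=
                W_mono (hmono (k+1) m (by omega)) (W_mono (List.prefix_append _ _) hbW')
              rw [hsucc k, hik] at h1
              have h2 : (e rr).1 ∈ W 2 (t k ++ [0]) := by rw [hik, h11] at hk; exact hk
              exact lexLT_asymm hbz (lexLT_children h2 h1)
          have hkn' : k ≠ n := by
            rintro rfl
            have := hoff k _ _ ⟨hzZ, hk⟩ ⟨haZ, haW⟩
            rw [this] at hza
            exact lexLT_irrefl _ hza
          have hkm : ¬ m < k := by
            intro hlt2
            have h1 : (e rr).1 ∈ W 2 (t (m+1)) :=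
              W_mono (hmono (m+1) k hlt2) (W_mono (List.prefix_append _ _) hk)
            rw [hsucc m, him] at h1
            exact lexLT_asymm hbz (lexLT_children h1 hbW')
          have hkm' : k ≠ m := by
            rintro rfl
            have := hoff k _ _ ⟨hzZ, hk⟩ ⟨hbZ, hbW⟩
            rw [this] at hbz
            exact lexLT_irrefl _ hbz
          exact ⟨k, by omega, by omega, hzZ, hk⟩
      choose φ hφn hφm hφmem using key
      have hinj : Function.Injective
          (fun x : Set.Ioo p q => (⟨φ x.1 x.2, hφn x.1 x.2, hφm x.1 x.2⟩ : Set.Ioo n m)) := by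
        intro x y hxy
        have hkk : φ x.1 x.2 = φ y.1 y.2 := by simpa using congrArg Subtype.val hxy
        have h1 := hφmem x.1 x.2
        have h2 := hφmem y.1 y.2
        rw [hkk] at h1
        have h3 := hoff _ _ _ h1 h2
        exact Subtype.ext (e.injective (Subtype.ext h3))
      have hfin : Finite (Set.Ioo p q) := Finite.of_injective _ hinj
      have hInf : Infinite (Set.Ioo p q) := Set.Ioo.infinite hpq
      exact absurd hfin (@not_finite _ hInf)
    · -- i n = i m = 1 : off-children are the left children, a < b
      have him : i m = 1 := by rw [← hieq]; exact hin
      have haW' : a ∈ W 2 (t n ++ [0]) := by rw [hin, h11] at haW; exact haW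
      have hbW' : b ∈ W 2 (t m ++ [0]) := by rw [him, h11] at hbW; exact hbW
      have hbW1 : b ∈ W 2 (t n ++ [1]) := by
        have := hWm (W_mono (List.prefix_append _ _) hbW')
        rwa [hsucc n, hin] at this
      have hab : lexLT 2 a b := lexLT_children haW' hbW1
      set p := e.symm ⟨a, haZ⟩ with hp
      set q := e.symm ⟨b, hbZ⟩ with hq
      have hep : (e p).1 = a := by rw [hp, e.apply_symm_apply]
      have heq : (e q).1 = b := by rw [hq, e.apply_symm_apply]
      have hpq : p < q := (eLT e he).2 (by rw [hep, heq]; exact hab)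
      have key : ∀ rr : ℚ, rr ∈ Set.Ioo p q →
          ∃ k, n < k ∧ k < m ∧ (e rr).1 ∈ Z ∩ W 2 (t k ++ [1 - i k]) := by
        intro rr hrr
        have hzZ : (e rr).1 ∈ Z := (e rr).2
        have haz : lexLT 2 a (e rr).1 := by rw [← hep]; exact (eLT e he).1 hrr.1
        have hzb : lexLT 2 (e rr).1 b := by rw [← heq]; exact (eLT e he).1 hrr.2
        rcases hdecomp _ hzZ with hall | ⟨k, hk⟩
        · exfalso
          have h1 : (e rr).1 ∈ W 2 (t m ++ [1]) := by
            have := hall (m+1); rwa [hsucc m, him] at this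
          exact lexLT_asymm hzb (lexLT_children hbW' h1)
        · have hkn : ¬ k < n := by
            intro hlt2
            rcases fin2cases (i k) with hik | hik
            · have h1 : b ∈ W 2 (t (k+1)) :=
                W_mono (hmono (k+1) m (by omega)) (W_mono (List.prefix_append _ _) hbW')
              rw [hsucc k, hik] at h1
              have h2 : (e rr).1 ∈ W 2 (t k ++ [1]) := by rw [hik, h10] at hk; exact hk
              exact lexLT_asymm hzb (lexLT_children h1 h2)
            · have h1 : a ∈ W 2 (t (k+1)) :=
                W_mono (hmono (k+1) n hlt2) (W_mono (List.prefix_append _ _) haW')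
              rw [hsucc k, hik] at h1
              have h2 : (e rr).1 ∈ W 2 (t k ++ [0]) := by rw [hik, h11] at hk; exact hk
              exact lexLT_asymm haz (lexLT_children h2 h1)
          have hkn' : k ≠ n := by
            rintro rfl
            have := hoff k _ _ ⟨hzZ, hk⟩ ⟨haZ, haW⟩
            rw [this] at haz
            exact lexLT_irrefl _ haz
          have hkm : ¬ m < k := by
            intro hlt2
            have h1 : (e rr).1 ∈ W 2 (t (m+1)) :=
              W_mono (hmono (m+1) k hlt2) (W_mono (List.prefix_append _ _) hk)
            rw [hsucc m, him] at h1
            exact lexLT_asymm hzb (lexLT_children hbW' h1)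
          have hkm' : k ≠ m := by
            rintro rfl
            have := hoff k _ _ ⟨hzZ, hk⟩ ⟨hbZ, hbW⟩
            rw [this] at hzb
            exact lexLT_irrefl _ hzb
          exact ⟨k, by omega, by omega, hzZ, hk⟩
      choose φ hφn hφm hφmem using key
      have hinj : Function.Injective
          (fun x : Set.Ioo p q => (⟨φ x.1 x.2, hφn x.1 x.2, hφm x.1 x.2⟩ : Set.Ioo n m)) := by
        intro x y hxy
        have hkk : φ x.1 x.2 = φ y.1 y.2 := by simpa using congrArg Subtype.val hxy
        have h1 := hφmem x.1 x.2
        have h2 := hφmem y.1 y.2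
        rw [hkk] at h1
        have h3 := hoff _ _ _ h1 h2
        exact Subtype.ext (e.injective (Subtype.ext h3))
      have hfin : Finite (Set.Ioo p q) := Finite.of_injective _ hinj
      have hInf : Infinite (Set.Ioo p q) := Set.Ioo.infinite hpq
      exact absurd hfin (@not_finite _ hInf)
  obtain ⟨n1, hn1le, hne1⟩ := hinf 0
  obtain ⟨n2, hn2le, hne2⟩ := hinf (n1+1)
  obtain ⟨n3, hn3le, hne3⟩ := hinf (n2+1)
  rcases fin2cases (i n1) with h1 | h1 <;> rcases fin2cases (i n2) with h2 | h2 <;>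
    rcases fin2cases (i n3) with h3 | h3
  · exact hfinal n1 n2 (by omega) (h1.trans h2.symm) hne1 hne2
  · exact hfinal n1 n2 (by omega) (h1.trans h2.symm) hne1 hne2
  · exact hfinal n1 n3 (by omega) (h1.trans h3.symm) hne1 hne3
  · exact hfinal n2 n3 (by omega) (h2.trans h3.symm) hne2 hne3
  · exact hfinal n2 n3 (by omega) (h2.trans h3.symm) hne2 hne3
  · exact hfinal n1 n3 (by omega) (h1.trans h3.symm) hne1 hne3
  · exact hfinal n1 n2 (by omega) (h1.trans h2.symm) hne1 hne2
  · exact hfinal n1 n2 (by omega) (h1.trans h2.symm) hne1 hne2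

end NSAux
/-- if `A ⊆ 2^ω` is non scattered then
`T = {s : W_s ∩ A is non scattered}` is a perfect subtree. -/
theorem nonscattered_tree_perfect (A : Set (ℕ → Fin 2)) (hA : NonScattered A) :
    IsPerfectSubtree {s : List (Fin 2) | NonScattered (W 2 s ∩ A)} := by
  constructor
  · intro s t ht hst
    obtain ⟨Y, hY1, hY2⟩ := ht
    exact ⟨Y, hY1.trans (Set.inter_subset_inter_left A (NSAux.W_mono hst)), hY2⟩
  · intro s hs
    obtain ⟨Y, hYsub, hYiso⟩ := hs
    have hYW : Y ⊆ W 2 s := hYsub.trans Set.inter_subset_left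
    have hYA : Y ⊆ A := hYsub.trans Set.inter_subset_right
    obtain ⟨u, v, w, hu, hv, hw, huv, hvw⟩ := NSAux.threePts hYiso
    have hTwo : NSAux.TwoPts (Y ∩ W 2 s) :=
      ⟨u, ⟨hu, hYW hu⟩, v, ⟨hv, hYW hv⟩, NSAux.lexLT_ne huv⟩
    obtain ⟨i, hTwoi⟩ := NSAux.step_lemma hYiso hTwo
    obtain ⟨Z, hZY, hZW, hZiso⟩ := NSAux.ns_of_two hYiso hTwoi
    obtain ⟨t, hrt, hT0, hT1⟩ := NSAux.keyD hZiso hZW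
    have hZA : Z ⊆ A := hZY.trans hYA
    have hns : ∀ c : Fin 2, NSAux.TwoPts (Z ∩ W 2 (t ++ [c])) →
        NonScattered (W 2 (t ++ [c]) ∩ A) := by
      intro c hc
      obtain ⟨Z', hZ'Z, hZ'W, hZ'iso⟩ := NSAux.ns_of_two hZiso hc
      exact ⟨Z', fun x hx => ⟨hZ'W hx, hZA (hZ'Z hx)⟩, hZ'iso⟩
    refine ⟨t, ⟨⟨t ++ [0], hns 0 hT0, List.prefix_refl _⟩,
      ⟨t ++ [1], hns 1 hT1, List.prefix_refl _⟩⟩, ?_, ?_⟩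
    · exact (List.prefix_append s [i]).trans hrt
    · intro h
      have h1 : (s ++ [i]).length ≤ t.length := hrt.length_le
      rw [← h] at h1
      simp at h1
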